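/- arXiv:2306.14716 — 6 statements merged into one kernel-verified Lean document; each statement's English description precedes it below -/
import Mathlib

section
/- Nonempty open active sets of efficient representations: Let k ≥ 1 and let f : ℝⁿ → ℝ admit an efficient C^k Min-type representation {α₁, …, α_m} at q. Then for every index i and every neighborhood V of q, the interior of the active set Aᵢ = {f = αᵢ} intersects V; in particular each open active set Aᵢ° is nonempty as a germ at q. -/
noncomputable section

open Set

/-- Euclidean space `ℝⁿ`. -/
abbrev Euc (n : ℕ) : Type := EuclideanSpace ℝ (Fin n)

/-- `f` admits the `C^k` Min-type representation `{α₁, …, α_m}` at `q` on the specific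
neighborhood `N`: each `αᵢ` is `C^k` on `N` and `f = min αᵢ` on `N`. -/
def IsMinTypeRepOn {n : ℕ} (k : ℕ) {m : ℕ} (f : Euc n → ℝ) (α : Fin m → Euc n → ℝ)
    (q : Euc n) (N : Set (Euc n)) : Prop :=
  IsOpen N ∧ q ∈ N ∧ (∀ i, ContDiffOn ℝ k (α i) N) ∧
    ∀ x ∈ N, (∀ i, f x ≤ α i x) ∧ ∃ i, f x = α i x

/-- `f` admits the `C^k` Min-type representation `{α₁, …, α_m}` at `q`. -/
def IsMinTypeRep {n : ℕ} (k : ℕ) {m : ℕ} (f : Euc n → ℝ) (α : Fin m → Euc n → ℝ)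
    (q : Euc n) : Prop :=
  ∃ N : Set (Euc n), IsMinTypeRepOn k f α q N

/-- **Nonempty open active sets of efficient representations.** If `f` admits an efficient
`C^k` Min-type representation `{α₁, …, α_m}` at `q` (`k ≥ 1`) on a neighborhood `N`, then for
every index `i` and every neighborhood `V` of `q`, the interior of the active set
`Aᵢ = {x ∈ N | f x = αᵢ x}` intersects `V`; i.e. each open active set `Aᵢ°` is nonempty as a
germ at `q`. -/
theorem efficient_rep_open_active_sets_nonempty {n : ℕ} (k m : ℕ) (hk : 1 ≤ k)
    (f : Euc n → ℝ) (hf : Continuous f) (q : Euc n)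
    (α : Fin m → Euc n → ℝ) (N : Set (Euc n))
    (hrep : IsMinTypeRepOn k f α q N)
    (heff : ∀ (m' : ℕ) (β : Fin m' → Euc n → ℝ), IsMinTypeRep k f β q → m ≤ m') :
    ∀ i, ∀ V ∈ nhds q, (interior {x ∈ N | f x = α i x} ∩ V).Nonempty := by
  intro i V hV
  by_contra hcon
  rw [Set.not_nonempty_iff_eq_empty] at hcon
  obtain ⟨hNopen, hqN, hsmooth, hmin⟩ := hrep
  obtain ⟨m', rfl⟩ : ∃ m', m = m' + 1 :=
    ⟨m - 1, (Nat.succ_pred_eq_of_pos i.pos).symm⟩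
  -- the smaller neighborhood
  set N' : Set (Euc n) := N ∩ interior V with hN'def
  have hN'open : IsOpen N' := hNopen.inter isOpen_interior
  have hqN' : q ∈ N' := ⟨hqN, mem_interior_iff_mem_nhds.2 hV⟩
  -- key claim: on N', the minimum is attained at some index ≠ i
  have key : ∀ x ∈ N', ∃ j : Fin m', f x = α (i.succAbove j) x := by
    intro x hx
    by_contra h
    push_neg at h
    have hle := (hmin x hx.1).1
    have hlt : ∀ j, j ≠ i → f x < α j x := by
      intro j hj
      obtain ⟨c, hc⟩ := Fin.exists_succAbove_eq hj
      exact lt_of_le_of_ne (hle j) (by rw [← hc]; exact h c)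
    -- eventually, f y < α j y for all j ≠ i
    have hev : ∀ᶠ y in nhds x, ∀ j, j ≠ i → f y < α j y := by
      rw [Filter.eventually_all]
      intro j
      by_cases hj : j = i
      · exact Filter.Eventually.of_forall (fun y h => absurd hj h)
      · have hαc : ContinuousAt (α j) x :=
          (hsmooth j).continuousOn.continuousAt (hNopen.mem_nhds hx.1)
        filter_upwards [hf.continuousAt.eventually_lt hαc (hlt j hj)] with y hy _
        exact hy
    have hevN : ∀ᶠ y in nhds x, y ∈ N' := hN'open.mem_nhds hx
    have hmem : {x ∈ N | f x = α i x} ∈ nhds x := by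
      filter_upwards [hev, hevN] with y hy hyN'
      refine ⟨hyN'.1, ?_⟩
      obtain ⟨j, hj⟩ := (hmin y hyN'.1).2
      rcases eq_or_ne j i with rfl | hne
      · exact hj
      · exact absurd hj (ne_of_lt (hy j hne))
    have : x ∈ interior {x ∈ N | f x = α i x} ∩ V :=
      ⟨mem_interior_iff_mem_nhds.2 hmem, interior_subset hx.2⟩
    rw [hcon] at this
    exact this
  -- build the smaller representation
  have hrep' : IsMinTypeRep k f (fun j => α (i.succAbove j)) q := by
    refine ⟨N', hN'open, hqN', fun j => (hsmooth _).mono inter_subset_left, ?_⟩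
    intro x hx
    exact ⟨fun j => (hmin x hx.1).1 _, key x hx⟩
  have := heff m' (fun j => α (i.succAbove j)) hrep'
  omega
end
end

section
/- Connectedness of open active sets of efficient-LIG representations: Let k ≥ 1 and let f : ℝⁿ → ℝ admit an efficient-LIG C^k Min-type representation {α₁, …, α_m} at q. Then for every index i and every neighborhood V of q, there exists an open neighborhood V' ⊆ V of q such that Aᵢ° ∩ V' is nonempty and connected, where Aᵢ° is the interior of the active set Aᵢ = {f = αᵢ}. -/
noncomputable section

open Set

lemma exists_inner_eq_one {E : Type*} [NormedAddCommGroup E] [InnerProductSpace ℝ E]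
    [FiniteDimensional ℝ E] {J : Type*} [Fintype J] {w : J → E}
    (hw : LinearIndependent ℝ w) : ∃ u : E, ∀ j, (inner ℝ (w j) u : ℝ) = 1 := by
  classical
  set T : E →ₗ[ℝ] (J → ℝ) := LinearMap.pi (fun j => ((innerSL ℝ (w j)) : E →L[ℝ] ℝ).toLinearMap)
    with hT
  set B : (J → ℝ) →ₗ[ℝ] E := Fintype.linearCombination ℝ w with hB
  have hBapp : ∀ c : J → ℝ, B c = ∑ j, c j • w j := fun c => rfl
  have hG : Function.Injective (T.comp B) := by
    rw [← LinearMap.ker_eq_bot, LinearMap.ker_eq_bot']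
    intro e h0
    have h1 : ∀ j, (inner ℝ (w j) (B e) : ℝ) = 0 := by
      intro j
      have := congrFun h0 j
      simpa [hT, LinearMap.pi_apply] using this
    have h2 : (inner ℝ (B e) (B e) : ℝ) = 0 := by
      nth_rewrite 1 [hBapp]
      rw [sum_inner]
      exact Finset.sum_eq_zero fun j _ => by
        rw [real_inner_smul_left, h1 j, mul_zero]
    have h3 : B e = 0 := by rwa [inner_self_eq_zero] at h2
    funext j
    exact Fintype.linearIndependent_iff.1 hw e (by rw [← hBapp]; exact h3) j
  have hsurj : Function.Surjective (T.comp B) := LinearMap.injective_iff_surjective.1 hG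
  obtain ⟨c, hc⟩ := hsurj (fun _ => 1)
  refine ⟨B c, fun j => ?_⟩
  have := congrFun hc j
  simpa [hT, LinearMap.pi_apply] using this

lemma line_lb {n : ℕ} {g : EuclideanSpace ℝ (Fin n) → ℝ} {s : Set (EuclideanSpace ℝ (Fin n))}
    (hs : IsOpen s) (hg : DifferentiableOn ℝ g s) {u : EuclideanSpace ℝ (Fin n)} {c : ℝ}
    (hd : ∀ y ∈ s, c ≤ fderiv ℝ g y u) {x : EuclideanSpace ℝ (Fin n)} {t : ℝ} (ht : 0 ≤ t)
    (hseg : ∀ τ ∈ Icc (0:ℝ) t, x + τ • u ∈ s) :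
    g x + t * c ≤ g (x + t • u) := by
  set φ : ℝ → ℝ := fun τ => g (x + τ • u) - τ * c with hφ
  have hψ : ∀ τ : ℝ, HasDerivAt (fun σ : ℝ => x + σ • u) u τ := by
    intro τ
    have h1 : HasDerivAt (fun σ : ℝ => σ • u) ((1:ℝ) • u) τ := (hasDerivAt_id τ).smul_const u
    simpa using h1.const_add x
  have hder : ∀ τ ∈ Icc (0:ℝ) t, HasDerivAt φ (fderiv ℝ g (x + τ • u) u - c) τ := by
    intro τ hτ
    have hmem := hseg τ hτ
    have hgd : HasFDerivAt g (fderiv ℝ g (x + τ • u)) (x + τ • u) :=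
      (hg.differentiableAt (hs.mem_nhds hmem)).hasFDerivAt
    have h1 : HasDerivAt (fun σ : ℝ => g (x + σ • u)) (fderiv ℝ g (x + τ • u) u) τ :=
      hgd.comp_hasDerivAt τ (hψ τ)
    exact h1.sub (hasDerivAt_mul_const c)
  have hmono : MonotoneOn φ (Icc 0 t) := by
    apply monotoneOn_of_deriv_nonneg (convex_Icc 0 t)
    · exact fun τ hτ => ((hder τ hτ).continuousAt).continuousWithinAt
    · intro τ hτ
      rw [interior_Icc] at hτ
      exact ((hder τ ⟨le_of_lt hτ.1, le_of_lt hτ.2⟩).differentiableAt).differentiableWithinAt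
    · intro τ hτ
      rw [interior_Icc] at hτ
      have hτ' : τ ∈ Icc (0:ℝ) t := ⟨le_of_lt hτ.1, le_of_lt hτ.2⟩
      rw [(hder τ hτ').deriv]
      have := hd _ (hseg τ hτ')
      linarith
  have h01 : (0:ℝ) ∈ Icc (0:ℝ) t := ⟨le_refl _, ht⟩
  have h02 : t ∈ Icc (0:ℝ) t := ⟨ht, le_refl _⟩
  have := hmono h01 h02 ht
  simp only [hφ, zero_smul, add_zero, zero_mul, sub_zero] at this
  linarith


set_option maxHeartbeats 2000000 in
/-- **Connectedness of open active sets of efficient-LIG representations.** If `f` admits an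
efficient-LIG `C^k` Min-type representation `{α₁, …, α_m}` at `q` (`k ≥ 1`) on a neighborhood
`N`, then for every index `i` and every neighborhood `V` of `q`, there is an open neighborhood
`V' ⊆ V` of `q` such that `Aᵢ° ∩ V'` is nonempty and connected, where `Aᵢ°` is the interior
of the active set `Aᵢ = {x ∈ N | f x = αᵢ x}`. -/
theorem efficient_LIG_rep_open_active_sets_connected {n : ℕ} (k m : ℕ) (hk : 1 ≤ k)
    (f : Euc n → ℝ) (hf : Continuous f) (q : Euc n)
    (α : Fin m → Euc n → ℝ) (N : Set (Euc n))
    (hrep : IsMinTypeRepOn k f α q N)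
    (heff : ∀ (m' : ℕ) (β : Fin m' → Euc n → ℝ), IsMinTypeRep k f β q → m ≤ m')
    (hLIG : AffineIndependent ℝ fun i => gradient (α i) q) :
    ∀ i, ∀ V ∈ nhds q, ∃ V' : Set (Euc n), IsOpen V' ∧ q ∈ V' ∧ V' ⊆ V ∧
      IsConnected (interior {x ∈ N | f x = α i x} ∩ V') := by
  classical
  obtain ⟨hNopen, hqN, hcd, hmin⟩ := hrep
  intro i V hV
  have hk1 : (1 : WithTop ℕ∞) ≤ (k : WithTop ℕ∞) := by exact_mod_cast hk
  have hdiffα : ∀ j, DifferentiableOn ℝ (α j) N := fun j => (hcd j).differentiableOn (lt_of_lt_of_le zero_lt_one hk1).ne'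
  have hdiffg : ∀ j : Fin m, DifferentiableOn ℝ (fun x => α j x - α i x) N :=
    fun j => (hdiffα j).sub (hdiffα i)
  have hcg : ∀ j : Fin m, ContinuousOn (fun x => α j x - α i x) N :=
    fun j => ((hcd j).continuousOn).sub ((hcd i).continuousOn)
  -- Step 1 : `f q = α i q`, using efficiency.
  have hfq : f q = α i q := by
    by_contra hne
    have hlt : f q < α i q := lt_of_le_of_ne ((hmin q hqN).1 i) hne
    obtain ⟨j0, hj0⟩ := (hmin q hqN).2
    have hm : 0 < m := i.pos
    obtain ⟨m₀, rfl⟩ : ∃ m₀, m = m₀ + 1 := ⟨m - 1, by omega⟩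
    set N' : Set (Euc n) := N ∩ (fun x => α i x - α j0 x) ⁻¹' Ioi 0 with hN'def
    have hN'open : IsOpen N' :=
      ContinuousOn.isOpen_inter_preimage
        (((hcd i).continuousOn).sub ((hcd j0).continuousOn)) hNopen isOpen_Ioi
    have hqN' : q ∈ N' := ⟨hqN, by simp only [mem_preimage, mem_Ioi, sub_pos]; rw [← hj0]; exact hlt⟩
    have hrep' : IsMinTypeRep k f (fun kk => α (i.succAbove kk)) q := by
      refine ⟨N', hN'open, hqN', fun kk => (hcd _).mono inter_subset_left, ?_⟩
      intro x hx
      refine ⟨fun kk => (hmin x hx.1).1 _, ?_⟩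
      obtain ⟨j, hj⟩ := (hmin x hx.1).2
      have h2 : α j0 x < α i x := by
        have := hx.2
        simp only [mem_preimage, mem_Ioi, sub_pos] at this
        exact this
      have hji : j ≠ i := by
        intro h
        subst h
        have h1 : f x ≤ α j0 x := (hmin x hx.1).1 _
        linarith [hj]
      obtain ⟨kk, hkk⟩ := Fin.exists_succAbove_eq hji
      exact ⟨kk, by simp only []; rw [hkk]; exact hj⟩
    have := heff m₀ _ hrep'
    omega
  have h0 : ∀ j, 0 ≤ α j q - α i q := fun j => by
    have := (hmin q hqN).1 j
    linarith [hfq]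
  -- Step 2 : the direction `u`.
  have hw : LinearIndependent ℝ
      (fun j : {j : Fin m // j ≠ i} => gradient (α (j : Fin m)) q - gradient (α i) q) := by
    have := (affineIndependent_iff_linearIndependent_vsub ℝ (fun j => gradient (α j) q) i).1 hLIG
    simpa [vsub_eq_sub] using this
  obtain ⟨u, hu⟩ := exists_inner_eq_one hw
  -- value of the derivative of `α j - α i` at `q` in direction `u`
  have hfdq : ∀ j : Fin m, j ≠ i → fderiv ℝ (fun x => α j x - α i x) q u = 1 := by
    intro j hj
    have hdj : DifferentiableAt ℝ (α j) q := (hdiffα j).differentiableAt (hNopen.mem_nhds hqN)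
    have hdi : DifferentiableAt ℝ (α i) q := (hdiffα i).differentiableAt (hNopen.mem_nhds hqN)
    have hsub : fderiv ℝ (fun x => α j x - α i x) q = fderiv ℝ (α j) q - fderiv ℝ (α i) q :=
      fderiv_fun_sub hdj hdi
    have hgj : (inner ℝ (gradient (α j) q) u : ℝ) = fderiv ℝ (α j) q u :=
      InnerProductSpace.toDual_symm_apply
    have hgi : (inner ℝ (gradient (α i) q) u : ℝ) = fderiv ℝ (α i) q u :=
      InnerProductSpace.toDual_symm_apply
    have hu' := hu ⟨j, hj⟩
    rw [inner_sub_left, hgj, hgi] at hu'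
    rw [hsub]
    simpa using hu'
  -- Step 3 : a ball on which the directional derivatives stay above 1/2
  have hcontf : ∀ j : Fin m, ContinuousOn (fun x => fderiv ℝ (fun y => α j y - α i y) x u) N := by
    intro j
    have h1 : ContDiffOn ℝ k (fun y => α j y - α i y) N := (hcd j).sub (hcd i)
    exact (h1.continuousOn_fderiv_of_isOpen hNopen hk1).clm_apply continuousOn_const
  have hev1 : ∀ᶠ x in nhds q, ∀ j : Fin m, j ≠ i →
      1/2 < fderiv ℝ (fun y => α j y - α i y) x u := by
    rw [Filter.eventually_all]
    intro j
    by_cases hj : j = i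
    · exact Filter.Eventually.of_forall fun x hji => absurd hj hji
    · have hc : ContinuousAt (fun x => fderiv ℝ (fun y => α j y - α i y) x u) q :=
        (hcontf j).continuousAt (hNopen.mem_nhds hqN)
      have hgt : (1:ℝ)/2 < fderiv ℝ (fun y => α j y - α i y) q u := by
        rw [hfdq j hj]; norm_num
      filter_upwards [hc (Ioi_mem_nhds hgt)] with x hx _ using hx
  obtain ⟨r, hr0, hball⟩ := Metric.mem_nhds_iff.1
    (Filter.inter_mem (hNopen.mem_nhds hqN) (Filter.inter_mem hV hev1))
  -- Step 4 : the constants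
  set T : ℝ := r / (2 * (‖u‖ + 1)) with hTdef
  have hT0 : 0 < T := div_pos hr0 (by positivity)
  have hTu : T * ‖u‖ < r / 2 := by
    have h1 : T * (‖u‖ + 1) = r / 2 := by
      rw [hTdef]
      field_simp
    nlinarith [hT0]
  set η : ℝ := T / 4 with hηdef
  have hη0 : 0 < η := by positivity
  have h2η : 2 * η < T := by rw [hηdef]; linarith
  have hev2 : ∀ᶠ b in nhds q, ∀ j : Fin m, j ≠ i → -η < α j b - α i b := by
    rw [Filter.eventually_all]
    intro j
    by_cases hj : j = i
    · exact Filter.Eventually.of_forall fun x hji => absurd hj hji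
    · have hc : ContinuousAt (fun x => α j x - α i x) q :=
        (hcg j).continuousAt (hNopen.mem_nhds hqN)
      have hgt : -η < α j q - α i q := lt_of_lt_of_le (by linarith) (h0 j)
      filter_upwards [hc (Ioi_mem_nhds hgt)] with x hx _ using hx
  obtain ⟨δ₀, hδ₀0, hδ₀⟩ := Metric.mem_nhds_iff.1 hev2
  set δ : ℝ := min δ₀ (r/2) with hδdef
  have hδ0 : 0 < δ := lt_min hδ₀0 (by linarith)
  have hδr : δ + T * ‖u‖ < r := by
    have := min_le_right δ₀ (r/2)
    have h := hTu
    simp only [hδdef]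
    linarith
  have hδδ₀ : δ ≤ δ₀ := min_le_left _ _
  -- Step 5 : the open set `C` (a capsule)
  set C : Set (Euc n) := ⋃ t ∈ Ico (0:ℝ) T, Metric.ball (q + t • u) δ with hCdef
  have hCopen : IsOpen C := isOpen_biUnion fun t _ => Metric.isOpen_ball
  have hqC : q ∈ C := by
    refine mem_biUnion (show (0:ℝ) ∈ Ico (0:ℝ) T from ⟨le_refl _, hT0⟩) ?_
    simp only [zero_smul, add_zero]
    exact Metric.mem_ball_self hδ0
  have hCmem : ∀ x ∈ C, ∃ b ∈ Metric.ball q δ, ∃ t, 0 ≤ t ∧ t < T ∧ x = b + t • u := by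
    intro x hx
    obtain ⟨t, ht, hxt⟩ := mem_iUnion₂.1 hx
    refine ⟨x - t • u, ?_, t, ht.1, ht.2, by abel⟩
    rw [Metric.mem_ball, dist_eq_norm] at hxt ⊢
    convert hxt using 2
    abel
  have hmemC : ∀ (b : Euc n), b ∈ Metric.ball q δ → ∀ t : ℝ, 0 ≤ t → t < T → b + t • u ∈ C := by
    intro b hb t ht0 htT
    refine mem_biUnion (show t ∈ Ico (0:ℝ) T from ⟨ht0, htT⟩) ?_
    rw [Metric.mem_ball, dist_eq_norm] at hb ⊢
    convert hb using 2
    abel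
  have hcap : ∀ (b : Euc n), b ∈ Metric.ball q δ → ∀ s : ℝ, 0 ≤ s → s ≤ T →
      b + s • u ∈ Metric.ball q r := by
    intro b hb s hs0 hsT
    rw [Metric.mem_ball] at hb ⊢
    have h1 : dist (b + s • u) q ≤ dist (b + s • u) b + dist b q := dist_triangle _ _ _
    have h2 : dist (b + s • u) b = s * ‖u‖ := by
      rw [dist_eq_norm, add_sub_cancel_left, norm_smul, Real.norm_eq_abs, abs_of_nonneg hs0]
    have h3 : s * ‖u‖ ≤ T * ‖u‖ := mul_le_mul_of_nonneg_right hsT (norm_nonneg u)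
    linarith
  have hCr : C ⊆ Metric.ball q r := by
    intro x hx
    obtain ⟨b, hb, t, ht0, htT, rfl⟩ := hCmem x hx
    exact hcap b hb t ht0 (le_of_lt htT)
  have hrN : Metric.ball q r ⊆ N := fun x hx => (hball hx).1
  have hrV : Metric.ball q r ⊆ V := fun x hx => (hball hx).2.1
  have hrd : ∀ x ∈ Metric.ball q r, ∀ j : Fin m, j ≠ i →
      1/2 < fderiv ℝ (fun y => α j y - α i y) x u := fun x hx => (hball hx).2.2
  -- Step 6 : moving in the direction `u` increases each `α j - α i`
  have hkey : ∀ (b : Euc n), b ∈ Metric.ball q δ → ∀ s t : ℝ, 0 ≤ s → 0 ≤ t → s + t ≤ T →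
      ∀ j : Fin m, j ≠ i →
      (α j (b + s • u) - α i (b + s • u)) + t * (1/2) ≤
        α j (b + (s + t) • u) - α i (b + (s + t) • u) := by
    intro b hb s t hs0 ht0 hstT j hj
    have hgd : DifferentiableOn ℝ (fun x => α j x - α i x) (Metric.ball q r) :=
      (hdiffg j).mono hrN
    have hd : ∀ y ∈ Metric.ball q r, (1:ℝ)/2 ≤ fderiv ℝ (fun x => α j x - α i x) y u :=
      fun y hy => le_of_lt (hrd y hy j hj)
    have hseg : ∀ τ ∈ Icc (0:ℝ) t, (b + s • u) + τ • u ∈ Metric.ball q r := by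
      intro τ hτ
      have : (b + s • u) + τ • u = b + (s + τ) • u := by
        rw [add_smul]; abel
      rw [this]
      exact hcap b hb (s + τ) (by linarith [hτ.1]) (by linarith [hτ.2])
    have := line_lb Metric.isOpen_ball hgd hd ht0 hseg
    have heq : (b + s • u) + t • u = b + (s + t) • u := by rw [add_smul]; abel
    rw [heq] at this
    linarith
  -- Step 7 : identification of the active set inside `C`
  set P : Set (Euc n) := {x | ∀ j : Fin m, j ≠ i → 0 < α j x - α i x} with hPdef
  have hSeq : interior {x ∈ N | f x = α i x} ∩ C = C ∩ P := by
    ext x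
    constructor
    · rintro ⟨hxi, hxC⟩
      refine ⟨hxC, fun j hj => ?_⟩
      have hA : {x ∈ N | f x = α i x} ∈ nhds x := mem_interior_iff_mem_nhds.1 hxi
      have hge : ∀ᶠ y in nhds x, 0 ≤ α j y - α i y := by
        filter_upwards [hA] with y hy
        have h1 : f y ≤ α j y := (hmin y hy.1).1 j
        have h2 : f y = α i y := hy.2
        linarith
      have hx0 : 0 ≤ α j x - α i x := hge.self_of_nhds
      rcases lt_or_eq_of_le hx0 with h | h
      · exact h
      · exfalso
        have hlm : IsLocalMin (fun y => α j y - α i y) x := by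
          filter_upwards [hge] with y hy
          show α j x - α i x ≤ α j y - α i y
          linarith [h]
        have hz := hlm.fderiv_eq_zero
        have := hrd x (hCr hxC) j hj
        rw [hz] at this
        simp only [ContinuousLinearMap.zero_apply] at this
        linarith
    · rintro ⟨hxC, hxP⟩
      refine ⟨?_, hxC⟩
      set O : Set (Euc n) := {y ∈ N | ∀ j : Fin m, j ≠ i → 0 < α j y - α i y} with hOdef
      have hOopen : IsOpen O := by
        rw [isOpen_iff_mem_nhds]
        intro y hy
        have h1 : ∀ᶠ z in nhds y, z ∈ N := hNopen.mem_nhds hy.1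
        have h2 : ∀ᶠ z in nhds y, ∀ j : Fin m, j ≠ i → 0 < α j z - α i z := by
          rw [Filter.eventually_all]
          intro j
          by_cases hj : j = i
          · exact Filter.Eventually.of_forall fun z hji => absurd hj hji
          · have hc : ContinuousAt (fun z => α j z - α i z) y :=
              (hcg j).continuousAt (hNopen.mem_nhds hy.1)
            filter_upwards [hc (Ioi_mem_nhds (hy.2 j hj))] with z hz _ using hz
        filter_upwards [h1, h2] with z hz1 hz2 using ⟨hz1, hz2⟩
      have hOA : O ⊆ {x ∈ N | f x = α i x} := by
        intro y hy
        refine ⟨hy.1, ?_⟩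
        obtain ⟨j, hj⟩ := (hmin y hy.1).2
        by_cases hji : j = i
        · rw [← hji]; exact hj
        · exfalso
          have h1 : 0 < α j y - α i y := hy.2 j hji
          have h2 : f y ≤ α i y := (hmin y hy.1).1 i
          linarith [hj]
      exact interior_maximal hOA hOopen ⟨hrN (hCr hxC), hxP⟩
  -- Step 8 : the convex core `K`
  set K : Set (Euc n) :=
    {x | ∃ b ∈ Metric.ball q δ, ∃ s : ℝ, 2 * η < s ∧ s < T ∧ x = b + s • u} with hKdef
  have hKC : K ⊆ C := by
    rintro x ⟨b, hb, s, hs1, hs2, rfl⟩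
    exact hmemC b hb s (by linarith) hs2
  have hKP : K ⊆ P := by
    rintro x ⟨b, hb, s, hs1, hs2, rfl⟩
    intro j hj
    have hbδ₀ : b ∈ Metric.ball q δ₀ := Metric.ball_subset_ball hδδ₀ hb
    have hbη : -η < α j b - α i b := hδ₀ hbδ₀ j hj
    have := hkey b hb 0 s (le_refl _) (by linarith) (by linarith) j hj
    rw [zero_add] at this
    simp only [zero_smul, add_zero] at this
    linarith
  have hKCP : K ⊆ C ∩ P := fun x hx => ⟨hKC hx, hKP hx⟩
  have hKconv : Convex ℝ K := by
    rintro x ⟨bx, hbx, sx, hsx1, hsx2, rfl⟩ y ⟨by', hby, sy, hsy1, hsy2, rfl⟩ a c ha hc hac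
    refine ⟨a • bx + c • by', convex_ball q δ hbx hby ha hc hac,
      a * sx + c * sy, ?_, ?_, ?_⟩
    · have := (convex_Ioo (2*η) T ⟨hsx1, hsx2⟩ ⟨hsy1, hsy2⟩ ha hc hac).1
      simpa using this
    · have := (convex_Ioo (2*η) T ⟨hsx1, hsx2⟩ ⟨hsy1, hsy2⟩ ha hc hac).2
      simpa using this
    · rw [smul_add, smul_add, add_smul, smul_smul, smul_smul]
      abel
  set x₀ : Euc n := q + ((2 * η + T)/2) • u with hx₀def
  have hx₀K : x₀ ∈ K :=
    ⟨q, Metric.mem_ball_self hδ0, (2 * η + T)/2, by linarith, by linarith, rfl⟩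
  -- Step 9 : connectedness of `C ∩ P`
  have hconn : IsConnected (C ∩ P) := by
    refine ⟨⟨x₀, hKCP hx₀K⟩, ?_⟩
    apply isPreconnected_of_forall x₀
    intro y hy
    obtain ⟨b, hb, t₀, ht₀0, ht₀T, rfl⟩ := hCmem y hy.1
    set σ : ℝ := (max t₀ (2 * η) + T)/2 with hσdef
    have hmaxT : max t₀ (2 * η) < T := max_lt ht₀T h2η
    have hσ1 : max t₀ (2 * η) < σ := by rw [hσdef]; linarith
    have hσ2 : σ < T := by rw [hσdef]; linarith
    have ht₀σ : t₀ ≤ σ := le_of_lt (lt_of_le_of_lt (le_max_left _ _) hσ1)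
    have h2ησ : 2 * η < σ := lt_of_le_of_lt (le_max_right _ _) hσ1
    set R : Set (Euc n) := (fun τ : ℝ => b + τ • u) '' Icc t₀ σ with hRdef
    have hRpre : IsPreconnected R :=
      (convex_Icc t₀ σ).isPreconnected.image _
        ((continuous_const.add (continuous_id.smul continuous_const)).continuousOn)
    have hRsub : R ⊆ C ∩ P := by
      rintro x ⟨τ, hτ, rfl⟩
      constructor
      · exact hmemC b hb τ (le_trans ht₀0 hτ.1) (lt_of_le_of_lt hτ.2 hσ2)
      · intro j hj
        have h1 := hkey b hb t₀ (τ - t₀) ht₀0 (by linarith [hτ.1])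
          (by linarith [hτ.2]) j hj
        rw [add_sub_cancel] at h1
        have h2 : 0 < α j (b + t₀ • u) - α i (b + t₀ • u) := hy.2 j hj
        have h3 : 0 ≤ (τ - t₀) * (1/2) := by
          have := hτ.1; nlinarith
        linarith
    have hend : b + σ • u ∈ R := ⟨σ, ⟨ht₀σ, le_refl _⟩, rfl⟩
    have hendK : b + σ • u ∈ K := ⟨b, hb, σ, h2ησ, hσ2, rfl⟩
    refine ⟨R ∪ K, union_subset hRsub hKCP, Or.inr hx₀K,
      Or.inl ⟨t₀, ⟨le_refl _, ht₀σ⟩, rfl⟩, ?_⟩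
    exact IsPreconnected.union (b + σ • u) hend hendK hRpre (hKconv.isPreconnected)
  -- Conclusion
  refine ⟨C, hCopen, hqC, fun x hx => hrV (hCr hx), ?_⟩
  rw [hSeq]
  exact hconn
end
end

section
/- Maximality of open active sets: Let k ≥ 1 and let f : ℝⁿ → ℝ admit an efficient-LIG C^k Min-type representation {α₁, …, α_m} at q. Call an open set O ⊆ ℝⁿ an admissible germ at q if q ∈ closure(O), f is C^k on O, and for every neighborhood W of q there is a neighborhood W' ⊆ W of q with O ∩ W' nonempty and connected. Then: (a) each open active set Aᵢ° is an admissible germ at q; (b) for every admissible germ O at q there exist an index i and a neighborhood W of q with O ∩ W ⊆ Aᵢ°; and (c) if in addition Aᵢ° ∩ W₀ ⊆ O for some neighborhood W₀ of q, then O ∩ W₁ = Aᵢ° ∩ W₁ for some neighborhood W₁ of q; i.e., the germs of the Aᵢ° at q are exactly the maximal germs of connected open sets on which f is C^k. -/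
noncomputable section

open Set

/-- `O` is an admissible germ at `q` for `f`: `O` is open, `q ∈ closure O`, `f` is `C^k` on
`O`, and for every neighborhood `W` of `q` there is a smaller neighborhood `W' ⊆ W` of `q`
with `O ∩ W'` nonempty and connected. -/
def IsAdmissibleGerm {n : ℕ} (k : ℕ) (f : Euc n → ℝ) (q : Euc n) (O : Set (Euc n)) : Prop :=
  IsOpen O ∧ q ∈ closure O ∧ ContDiffOn ℝ k f O ∧
    ∀ W ∈ nhds q, ∃ W' ∈ nhds q, W' ⊆ W ∧ IsConnected (O ∩ W')

set_option maxHeartbeats 1000000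

lemma exists_dual_vec {E : Type*} [NormedAddCommGroup E] [InnerProductSpace ℝ E]
    [FiniteDimensional ℝ E] {ι : Type*} [Fintype ι] {u : ι → E}
    (hu : LinearIndependent ℝ u) : ∃ v : E, ∀ j, inner ℝ (u j) v = (1 : ℝ) := by
  classical
  set K := Submodule.span ℝ (Set.range u) with hK
  have hmem : ∀ j, u j ∈ K := fun j => Submodule.subset_span (Set.mem_range_self j)
  let b : Module.Basis ι ℝ K := Module.Basis.span hu
  let φ₀ : K →ₗ[ℝ] ℝ := ∑ j : ι, b.coord j
  let φ : E →ₗ[ℝ] ℝ := φ₀.comp ((K.orthogonalProjectionOnto).toLinearMap)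
  let v : E := (InnerProductSpace.toDual ℝ E).symm (LinearMap.toContinuousLinearMap φ)
  refine ⟨v, fun j => ?_⟩
  have h1 : inner ℝ v (u j) = φ (u j) :=
    InnerProductSpace.toDual_symm_apply (x := u j) (y := LinearMap.toContinuousLinearMap φ)
  have h2 : (K.orthogonalProjectionOnto) (u j) = ⟨u j, hmem j⟩ := by
    simpa using Submodule.orthogonalProjectionOnto_mem_subspace_eq_self (K := K) ⟨u j, hmem j⟩
  have h3 : (⟨u j, hmem j⟩ : K) = b j := by
    apply Subtype.ext
    exact congrArg Subtype.val (Module.Basis.span_apply hu j).symm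
  have h4 : φ (u j) = φ₀ (b j) := by
    simp only [φ, LinearMap.comp_apply, ContinuousLinearMap.coe_coe, h2, h3]
  have h5 : φ₀ (b j) = 1 := by
    simp [φ₀, LinearMap.sum_apply, Module.Basis.coord_apply, Module.Basis.repr_self,
      Finsupp.single_apply, Finset.sum_ite_eq]
  rw [real_inner_comm, h1, h4, h5]

lemma increase_along {E : Type*} [NormedAddCommGroup E] [NormedSpace ℝ E]
    {g : E → ℝ} {U : Set E} (hg : ∀ y ∈ U, DifferentiableAt ℝ g y)
    {v : E} {c : ℝ} (hd : ∀ y ∈ U, c ≤ fderiv ℝ g y v)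
    {x : E} {S : ℝ} (hS : 0 ≤ S) (hseg : ∀ t ∈ Icc (0:ℝ) S, x + t • v ∈ U) :
    g x + c * S ≤ g (x + S • v) := by
  rcases eq_or_lt_of_le hS with rfl | hS'
  · simp
  have key : ∀ t ∈ Icc (0:ℝ) S,
      HasDerivAt (fun t : ℝ => g (x + t • v) - c * t) (fderiv ℝ g (x + t • v) v - c) t := by
    intro t ht
    have hline : HasDerivAt (fun t : ℝ => x + t • v) v t := by
      simpa using ((hasDerivAt_id t).smul_const v).const_add x
    have h1 : HasDerivAt (fun t : ℝ => g (x + t • v)) (fderiv ℝ g (x + t • v) v) t :=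
      (hg _ (hseg t ht)).hasFDerivAt.comp_hasDerivAt t hline
    have h2 : HasDerivAt (fun t : ℝ => c * t) c t := by
      simpa using (hasDerivAt_id t).const_mul c
    exact h1.sub h2
  set ψ : ℝ → ℝ := fun t => g (x + t • v) - c * t with hψ
  have hmono : MonotoneOn ψ (Icc 0 S) := by
    apply monotoneOn_of_deriv_nonneg (convex_Icc 0 S)
    · exact fun t ht => (key t ht).continuousAt.continuousWithinAt
    · intro t ht
      rw [interior_Icc] at ht
      exact (key t (Ioo_subset_Icc_self ht)).differentiableAt.differentiableWithinAt
    · intro t ht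
      rw [interior_Icc] at ht
      rw [(key t (Ioo_subset_Icc_self ht)).deriv]
      have := hd _ (hseg t (Ioo_subset_Icc_self ht))
      linarith
  have h0 : ψ 0 ≤ ψ S := hmono (left_mem_Icc.2 hS) (right_mem_Icc.2 hS) hS
  simp only [ψ] at h0
  simp only [zero_smul, add_zero, mul_zero, sub_zero] at h0
  linarith

lemma strictSet_open_subset {E : Type*} [NormedAddCommGroup E] {m : ℕ}
    {f : E → ℝ} {α : Fin m → E → ℝ} {N : Set E} (hN : IsOpen N)
    (hc : ∀ i, ContinuousOn (α i) N)
    (hmin : ∀ x ∈ N, (∀ i, f x ≤ α i x) ∧ ∃ i, f x = α i x) (i : Fin m) :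
    IsOpen {y | y ∈ N ∧ ∀ j, j ≠ i → α i y < α j y} ∧
      {y | y ∈ N ∧ ∀ j, j ≠ i → α i y < α j y} ⊆ interior {x | x ∈ N ∧ f x = α i x} := by
  have hVopen : IsOpen {y | y ∈ N ∧ ∀ j, j ≠ i → α i y < α j y} := by
    have : {y | y ∈ N ∧ ∀ j, j ≠ i → α i y < α j y}
        = ⋂ j, {y | y ∈ N ∧ (j ≠ i → α i y < α j y)} := by
      ext y; simp [forall_and, forall_const]
      tauto
    rw [this]
    apply isOpen_iInter_of_finite
    intro j
    by_cases hj : j = i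
    · subst hj; simpa using hN
    · have : {y | y ∈ N ∧ (j ≠ i → α i y < α j y)}
          = N ∩ (fun y => α j y - α i y) ⁻¹' Ioi 0 := by
        ext y; simp [hj, sub_pos]
      rw [this]
      exact ContinuousOn.isOpen_inter_preimage ((hc j).sub (hc i)) hN isOpen_Ioi
  refine ⟨hVopen, ?_⟩
  apply interior_maximal _ hVopen
  rintro y ⟨hyN, hy⟩
  refine ⟨hyN, ?_⟩
  obtain ⟨hle, i₀, hi₀⟩ := hmin y hyN
  by_cases h : i₀ = i
  · rwa [h] at hi₀
  · exact absurd (hi₀ ▸ hle i) (not_le.2 (hi₀ ▸ hy i₀ h))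

lemma key_geom {n : ℕ} {k m : ℕ} (hk : 1 ≤ k) {f : Euc n → ℝ}
    {q : Euc n} {α : Fin m → Euc n → ℝ} {N : Set (Euc n)}
    (hN : IsOpen N) (hqN : q ∈ N) (hCD : ∀ i, ContDiffOn ℝ k (α i) N)
    (hmin : ∀ x ∈ N, (∀ i, f x ≤ α i x) ∧ ∃ i, f x = α i x)
    (hact : ∀ i, f q = α i q)
    (hLIG : AffineIndependent ℝ fun i => gradient (α i) q) (i : Fin m) :
    ∀ W ∈ nhds q, ∃ W' ∈ nhds q, W' ⊆ W ∧
      (∃ x ∈ W', x ∈ N ∧ ∀ j, j ≠ i → α i x < α j x) ∧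
      IsConnected (interior {x | x ∈ N ∧ f x = α i x} ∩ W') := by
  classical
  have hone : (1 : WithTop ℕ∞) ≤ ((k : ℕ∞) : WithTop ℕ∞) := by exact_mod_cast hk
  have hdiff : ∀ (j : Fin m), ∀ x ∈ N, DifferentiableAt ℝ (α j) x := fun j x hx =>
    ((hCD j).differentiableOn (by exact_mod_cast (show k ≠ 0 by omega))).differentiableAt (hN.mem_nhds hx)
  have hfc : ∀ j : Fin m, ContinuousOn (fderiv ℝ (α j)) N := fun j =>
    (hCD j).continuousOn_fderiv_of_isOpen hN hone
  have hgradfd : ∀ (j : Fin m) (w : Euc n),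
      fderiv ℝ (α j) q w = inner ℝ (gradient (α j) q) w := by
    intro j w
    rw [← InnerProductSpace.toDual_apply_apply]
    congr 1
    simp [gradient]
  have hu : LinearIndependent ℝ
      (fun j : {x : Fin m // x ≠ i} => gradient (α j.1) q - gradient (α i) q) := by
    have h := (affineIndependent_iff_linearIndependent_vsub ℝ
      (fun i => gradient (α i) q) i).1 hLIG
    simpa [vsub_eq_sub] using h
  obtain ⟨v, hv⟩ := exists_dual_vec hu
  have hFq : ∀ j : Fin m, j ≠ i → fderiv ℝ (α j) q v - fderiv ℝ (α i) q v = 1 := by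
    intro j hj
    rw [hgradfd, hgradfd, ← inner_sub_left]
    exact hv ⟨j, hj⟩
  set M : ℝ := 1 + 2 * ∑ j : Fin m, ‖fderiv ℝ (α j) q‖ with hM
  have hsum : ∀ j : Fin m, ‖fderiv ℝ (α j) q‖ ≤ ∑ l : Fin m, ‖fderiv ℝ (α l) q‖ :=
    fun j => Finset.single_le_sum (f := fun l => ‖fderiv ℝ (α l) q‖) (fun l _ => norm_nonneg _) (Finset.mem_univ j)
  have hsum0 : 0 ≤ ∑ j : Fin m, ‖fderiv ℝ (α j) q‖ :=
    Finset.sum_nonneg fun l _ => norm_nonneg _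
  have hM1 : 1 ≤ M := by simp only [hM]; linarith
  have hM0 : 0 < M := by linarith
  have hMj : ∀ j : Fin m, ‖fderiv ℝ (α j) q - fderiv ℝ (α i) q‖ < M := by
    intro j
    have h1 := hsum j
    have h2 := hsum i
    have := norm_sub_le (fderiv ℝ (α j) q) (fderiv ℝ (α i) q)
    simp only [hM]
    linarith
  -- eventual bounds near q
  have hev : ∀ᶠ x in nhds q, x ∈ N ∧ ∀ j : Fin m, j ≠ i →
      (1/2 ≤ fderiv ℝ (α j) x v - fderiv ℝ (α i) x v ∧
        ‖fderiv ℝ (α j) x - fderiv ℝ (α i) x‖ ≤ M) := by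
    refine Filter.Eventually.and (hN.mem_nhds hqN) (Filter.eventually_all.2 fun j => ?_)
    by_cases hj : j = i
    · exact Filter.Eventually.of_forall fun x h => absurd hj h
    · have hDc : ContinuousAt (fun x => fderiv ℝ (α j) x - fderiv ℝ (α i) x) q :=
        ((hfc j).sub (hfc i)).continuousAt (hN.mem_nhds hqN)
      have hc2 : ContinuousAt (fun x => fderiv ℝ (α j) x v - fderiv ℝ (α i) x v) q := by
        have h' := ((ContinuousLinearMap.apply ℝ ℝ v).continuous.continuousAt).comp hDc
        exact h'
      have h1 : ∀ᶠ x in nhds q, 1/2 < fderiv ℝ (α j) x v - fderiv ℝ (α i) x v := by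
        have hval : fderiv ℝ (α j) q v - fderiv ℝ (α i) q v = 1 := hFq j hj
        have := hc2.preimage_mem_nhds (Ioi_mem_nhds (by rw [hval]; norm_num :
          (1/2 : ℝ) < fderiv ℝ (α j) q v - fderiv ℝ (α i) q v))
        exact this
      have h2 : ∀ᶠ x in nhds q, ‖fderiv ℝ (α j) x - fderiv ℝ (α i) x‖ < M := by
        have hcn : ContinuousAt (fun x => ‖fderiv ℝ (α j) x - fderiv ℝ (α i) x‖) q :=
          continuous_norm.continuousAt.comp hDc
        exact hcn.preimage_mem_nhds (Iio_mem_nhds (hMj j))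
      exact (h1.and h2).mono fun x hx _ => ⟨hx.1.le, hx.2.le⟩
  obtain ⟨r, hr0, hball⟩ := Metric.eventually_nhds_iff_ball.1 hev
  have hballN : Metric.ball q r ⊆ N := fun x hx => (hball x hx).1
  have hhalf : ∀ x ∈ Metric.ball q r, ∀ j : Fin m, j ≠ i →
      1/2 ≤ fderiv ℝ (α j) x v - fderiv ℝ (α i) x v := fun x hx j hj => ((hball x hx).2 j hj).1
  have hnorm : ∀ x ∈ Metric.ball q r, ∀ j : Fin m, j ≠ i →
      ‖fderiv ℝ (α j) x - fderiv ℝ (α i) x‖ ≤ M := fun x hx j hj => ((hball x hx).2 j hj).2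
  have hdiffg : ∀ j : Fin m, ∀ y ∈ Metric.ball q r,
      DifferentiableAt ℝ (fun y => α j y - α i y) y := fun j y hy =>
    (hdiff j y (hballN hy)).sub (hdiff i y (hballN hy))
  have hfdg : ∀ j : Fin m, ∀ y ∈ Metric.ball q r,
      fderiv ℝ (fun y => α j y - α i y) y = fderiv ℝ (α j) y - fderiv ℝ (α i) y :=
    fun j y hy => fderiv_fun_sub (hdiff j y (hballN hy)) (hdiff i y (hballN hy))
  -- monotonicity along v
  have hmono : ∀ j : Fin m, j ≠ i → ∀ x ∈ Metric.ball q r, ∀ S : ℝ, 0 ≤ S →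
      x + S • v ∈ Metric.ball q r →
      (α j x - α i x) + S/2 ≤ α j (x + S • v) - α i (x + S • v) := by
    intro j hj x hx S hS hxS
    have hseg : ∀ t ∈ Icc (0:ℝ) S, x + t • v ∈ Metric.ball q r := by
      intro t ht
      rcases eq_or_lt_of_le hS with rfl | hS'
      · have : t = 0 := le_antisymm (by exact ht.2) ht.1
        simpa [this] using hx
      · have h01 : t / S ∈ Icc (0:ℝ) 1 :=
          ⟨div_nonneg ht.1 hS, div_le_one_of_le₀ ht.2 hS⟩
        have := (convex_ball q r).add_smul_mem hx (by simpa using hxS) h01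
        simpa [smul_smul, div_mul_cancel₀ t hS'.ne'] using this
    have := increase_along (g := fun y => α j y - α i y) (U := Metric.ball q r)
      (hdiffg j) (c := 1/2) (v := v) ?_ hS hseg
    · linarith
    · intro y hy
      rw [hfdg j y hy]
      simpa using hhalf y hy j hj
  -- lipschitz bound
  have hlip : ∀ j : Fin m, j ≠ i → ∀ y ∈ Metric.ball q r, ∀ z ∈ Metric.ball q r,
      ‖(α j y - α i y) - (α j z - α i z)‖ ≤ M * ‖y - z‖ := by
    intro j hj y hy z hz
    have := (convex_ball q r).norm_image_sub_le_of_norm_fderiv_le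
      (f := fun y => α j y - α i y) (C := M) (hdiffg j) ?_ hz hy
    · exact this
    · intro x hx
      rw [hfdg j x hx]
      exact hnorm x hx j hj
  -- active set facts
  have hVsub := (strictSet_open_subset hN (fun j => (hCD j).continuousOn) hmin i).2
  have hAmem : ∀ y ∈ interior {x | x ∈ N ∧ f x = α i x}, ∀ j : Fin m,
      0 ≤ α j y - α i y := by
    intro y hy j
    have hyA : y ∈ {x | x ∈ N ∧ f x = α i x} := interior_subset hy
    obtain ⟨hyN', hyf⟩ := hyA
    have h := (hmin y hyN').1 j
    rw [hyf] at h
    linarith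
  have hg0 : ∀ j : Fin m, α j q - α i q = 0 := by
    intro j; rw [← hact j, ← hact i]; ring
  -- main construction
  intro W hW
  obtain ⟨ρ, hρ0, hρW⟩ := Metric.mem_nhds_iff.1 hW
  set s : ℝ := min r ρ with hs
  have hs0 : 0 < s := lt_min hr0 hρ0
  set T : ℝ := s / (2 * (‖v‖ + 1)) with hT
  have hv1 : (0:ℝ) < ‖v‖ + 1 := by positivity
  have hT0 : 0 < T := by positivity
  set δ : ℝ := min (T / (4 * M)) (s / 4) with hδ
  have hδ0 : 0 < δ := lt_min (by positivity) (by positivity)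
  have hTv : T * ‖v‖ ≤ s / 2 := by
    have hne : 2 * (‖v‖ + 1) ≠ 0 := by positivity
    have h1 : T * (‖v‖ + 1) = s / 2 := by
      rw [hT]
      field_simp
    nlinarith [norm_nonneg v, hT0.le]
  have hδs : δ ≤ s / 4 := min_le_right _ _
  have hMδ : M * δ ≤ T / 4 := by
    have h1 : δ ≤ T / (4 * M) := min_le_left _ _
    have := mul_le_mul_of_nonneg_left h1 hM0.le
    calc M * δ ≤ M * (T / (4 * M)) := this
    _ = T / 4 := by field_simp
  have hsr : s ≤ r := min_le_left _ _
  have hsρ : s ≤ ρ := min_le_right _ _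
  set W' : Set (Euc n) := ⋃ t ∈ Icc (0:ℝ) T, Metric.ball (q + t • v) δ with hW'
  have hW'open : IsOpen W' := isOpen_biUnion fun t _ => Metric.isOpen_ball
  have hqW' : q ∈ W' := by
    refine mem_biUnion (left_mem_Icc.2 hT0.le) ?_
    simp [Metric.mem_ball, hδ0]
  have hW's : W' ⊆ Metric.ball q s := by
    rintro y hy
    simp only [hW', mem_iUnion, exists_prop] at hy
    obtain ⟨t, ht, hyt⟩ := hy
    have h1 : dist y q ≤ dist y (q + t • v) + dist (q + t • v) q := dist_triangle _ _ _
    have h2 : dist (q + t • v) q = t * ‖v‖ := by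
      rw [dist_eq_norm]
      simp [norm_smul, abs_of_nonneg ht.1]
    have h3 : t * ‖v‖ ≤ T * ‖v‖ := mul_le_mul_of_nonneg_right ht.2 (norm_nonneg v)
    rw [Metric.mem_ball] at hyt ⊢
    have : δ + s / 2 < s := by linarith
    linarith
  have hW'r : W' ⊆ Metric.ball q r := hW's.trans (Metric.ball_subset_ball hsr)
  have hW'W : W' ⊆ W := hW's.trans ((Metric.ball_subset_ball hsρ).trans hρW)
  -- points on the ray are strictly inside
  have hray : ∀ t : ℝ, 0 < t → t ≤ T →
      (q + t • v ∈ N ∧ ∀ j : Fin m, j ≠ i → α i (q + t • v) < α j (q + t • v)) := by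
    intro t ht0 htT
    have hmem : q + t • v ∈ Metric.ball q r := by
      rw [Metric.mem_ball, dist_eq_norm]
      have : ‖q + t • v - q‖ = t * ‖v‖ := by
        simp [norm_smul, abs_of_nonneg ht0.le]
      rw [this]
      have : t * ‖v‖ ≤ T * ‖v‖ := mul_le_mul_of_nonneg_right htT (norm_nonneg v)
      linarith [hTv, hs0, hsr]
    refine ⟨hballN hmem, fun j hj => ?_⟩
    have hq : q ∈ Metric.ball q r := Metric.mem_ball_self hr0
    have := hmono j hj q hq t ht0.le hmem
    have h0 := hg0 j
    have : 0 < α j (q + t • v) - α i (q + t • v) := by linarith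
    linarith
  -- the end ball is strictly inside
  have hBend : ∀ y ∈ Metric.ball (q + T • v) δ,
      (y ∈ N ∧ ∀ j : Fin m, j ≠ i → α i y < α j y) := by
    intro y hy
    have hyW' : y ∈ W' := mem_biUnion (right_mem_Icc.2 hT0.le) hy
    have hyr : y ∈ Metric.ball q r := hW'r hyW'
    refine ⟨hballN hyr, fun j hj => ?_⟩
    have hq : q ∈ Metric.ball q r := Metric.mem_ball_self hr0
    have hTvr : q + T • v ∈ Metric.ball q r := by
      rw [Metric.mem_ball, dist_eq_norm]
      have h1 : ‖q + T • v - q‖ = T * ‖v‖ := by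
        simp [norm_smul, abs_of_nonneg hT0.le]
      rw [h1]; linarith [hTv, hs0, hsr]
    have hT2 : T/2 ≤ α j (q + T • v) - α i (q + T • v) := by
      have hmq := hmono j hj q hq T hT0.le hTvr
      have h0 := hg0 j
      linarith
    have hdist : ‖y - (q + T • v)‖ < δ := by
      rw [← dist_eq_norm]; exact hy
    have hlp := hlip j hj y hyr (q + T • v) hTvr
    rw [Real.norm_eq_abs] at hlp
    have hMd : M * ‖y - (q + T • v)‖ ≤ M * δ :=
      mul_le_mul_of_nonneg_left hdist.le hM0.le
    have habs := (abs_le.1 hlp).1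
    have hpos : 0 < α j y - α i y := by
      clear_value M δ T s
      clear hlp hdist
      linarith [habs, hT2, hMd, hMδ, hT0]
    linarith
  -- nonemptiness witness
  have hp₀ : q + T • v ∈ Metric.ball (q + T • v) δ := Metric.mem_ball_self hδ0
  have hp₀V : q + T • v ∈ interior {x | x ∈ N ∧ f x = α i x} := by
    apply hVsub
    exact ⟨(hBend _ hp₀).1, (hBend _ hp₀).2⟩
  have hp₀W' : q + T • v ∈ W' := mem_biUnion (right_mem_Icc.2 hT0.le) hp₀
  -- connectivity
  set A : Set (Euc n) := interior {x | x ∈ N ∧ f x = α i x} with hA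
  set S : Set (Euc n) := A ∩ W' with hSdef
  have hSconn : IsPathConnected S := by
    refine ⟨q + T • v, ⟨hp₀V, hp₀W'⟩, ?_⟩
    intro y hy
    obtain ⟨hyA, hyW'⟩ := hy
    simp only [hW', mem_iUnion, exists_prop] at hyW'
    obtain ⟨t, ht, hyt⟩ := hyW'
    -- first segment: y to y + (T - t) • v
    have hstep : ∀ u' : ℝ, 0 ≤ u' → u' ≤ T - t → y + u' • v ∈ S := by
      intro u' hu0 huT
      rcases eq_or_lt_of_le hu0 with rfl | hu0'
      · simpa using ⟨hyA, mem_biUnion ht (by exact hyt)⟩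
      · have hmem2 : y + u' • v ∈ Metric.ball (q + (t + u') • v) δ := by
          rw [Metric.mem_ball, dist_eq_norm]
          have heq : y + u' • v - (q + (t + u') • v) = y - (q + t • v) := by
            module
          rw [heq, ← dist_eq_norm]
          exact hyt
        have htu : t + u' ∈ Icc (0:ℝ) T := ⟨by linarith [ht.1], by linarith [ht.2]⟩
        have hyW2 : y + u' • v ∈ W' := mem_biUnion htu hmem2
        have hyr2 : y + u' • v ∈ Metric.ball q r := hW'r hyW2
        have hyr : y ∈ Metric.ball q r := hW'r (mem_biUnion ht hyt)
        refine ⟨hVsub ⟨hballN hyr2, fun j hj => ?_⟩, hyW2⟩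
        have := hmono j hj y hyr u' hu0 hyr2
        have h0 := hAmem y hyA j
        have : 0 < α j (y + u' • v) - α i (y + u' • v) := by linarith
        linarith
    have hj1 : JoinedIn S y (y + (T - t) • v) := by
      apply JoinedIn.of_segment_subset
      intro z hz
      rw [segment_eq_image'] at hz
      obtain ⟨θ, hθ, rfl⟩ := hz
      show y + θ • ((y + (T - t) • v) - y) ∈ S
      have heq2 : y + θ • ((y + (T - t) • v) - y) = y + (θ * (T - t)) • v := by
        module
      rw [heq2]
      exact hstep _ (mul_nonneg hθ.1 (by linarith [ht.2])) (by nlinarith [hθ.2, ht.2])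
    have hj2 : JoinedIn S (y + (T - t) • v) (q + T • v) := by
      apply JoinedIn.of_segment_subset
      have hend : y + (T - t) • v ∈ Metric.ball (q + T • v) δ := by
        rw [Metric.mem_ball, dist_eq_norm]
        have heq : y + (T - t) • v - (q + T • v) = y - (q + t • v) := by
          module
        rw [heq, ← dist_eq_norm]
        exact hyt
      have hsub : Metric.ball (q + T • v) δ ⊆ S := by
        intro z hz
        exact ⟨hVsub ⟨(hBend z hz).1, (hBend z hz).2⟩,
          mem_biUnion (right_mem_Icc.2 hT0.le) hz⟩
      exact fun z hz =>
        hsub ((convex_ball _ _).segment_subset hend hp₀ hz)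
    exact (hj1.trans hj2).symm
  exact ⟨W', hW'open.mem_nhds hqW', hW'W,
    ⟨q + T • v, hp₀W', (hBend _ hp₀).1, (hBend _ hp₀).2⟩, hSconn.isConnected⟩

lemma all_active {n : ℕ} {k m : ℕ} {f : Euc n → ℝ} (hf : Continuous f) {q : Euc n}
    {α : Fin m → Euc n → ℝ} {N : Set (Euc n)} (hrep : IsMinTypeRepOn k f α q N)
    (heff : ∀ (m' : ℕ) (β : Fin m' → Euc n → ℝ), IsMinTypeRep k f β q → m ≤ m') :
    ∀ i, f q = α i q := by
  obtain ⟨hN, hqN, hCD, hmin⟩ := hrep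
  intro i
  by_contra hne
  have hlt : f q < α i q := lt_of_le_of_ne ((hmin q hqN).1 i) hne
  have hm : m ≠ 0 := by rintro rfl; exact i.elim0
  obtain ⟨m₀, rfl⟩ := Nat.exists_eq_succ_of_ne_zero hm
  set U : Set (Euc n) := N ∩ (fun y => α i y - f y) ⁻¹' Ioi 0 with hU
  have hUopen : IsOpen U :=
    ContinuousOn.isOpen_inter_preimage (((hCD i).continuousOn).sub hf.continuousOn)
      hN isOpen_Ioi
  have hqU : q ∈ U := ⟨hqN, by simp [sub_pos, hlt]⟩
  have hrep' : IsMinTypeRep k f (fun j => α (i.succAbove j)) q := by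
    refine ⟨U, hUopen, hqU, fun j => (hCD _).mono inter_subset_left, fun x hx => ?_⟩
    refine ⟨fun j => (hmin x hx.1).1 _, ?_⟩
    obtain ⟨i₁, h1⟩ := (hmin x hx.1).2
    have hi₁ : i₁ ≠ i := by
      rintro rfl
      have : (0:ℝ) < α i₁ x - f x := hx.2
      linarith [this, h1.ge, h1.le]
    obtain ⟨j, hj⟩ := Fin.exists_succAbove_eq hi₁
    exact ⟨j, by simp only [hj]; exact h1⟩
  exact absurd (heff m₀ _ hrep') (by omega)

/-- **Maximality of open active sets.** For an efficient-LIG `C^k` Min-type representation of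
`f` at `q` on `N` (`k ≥ 1`), with active sets `Aᵢ = {x ∈ N | f x = αᵢ x}`:
(a) each `Aᵢ°` is an admissible germ at `q`;
(b) every admissible germ at `q` is, near `q`, contained in some `Aᵢ°`;
(c) an admissible germ containing some `Aᵢ°` near `q` agrees with `Aᵢ°` near `q`.
So the germs of the `Aᵢ°` at `q` are exactly the maximal germs of connected open sets on which
`f` is `C^k`. -/
theorem open_active_sets_maximal {n : ℕ} (k m : ℕ) (hk : 1 ≤ k)
    (f : Euc n → ℝ) (hf : Continuous f) (q : Euc n)
    (α : Fin m → Euc n → ℝ) (N : Set (Euc n))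
    (hrep : IsMinTypeRepOn k f α q N)
    (heff : ∀ (m' : ℕ) (β : Fin m' → Euc n → ℝ), IsMinTypeRep k f β q → m ≤ m')
    (hLIG : AffineIndependent ℝ fun i => gradient (α i) q) :
    (∀ i, IsAdmissibleGerm k f q (interior {x ∈ N | f x = α i x})) ∧
    (∀ O : Set (Euc n), IsAdmissibleGerm k f q O →
      ∃ i, ∃ W ∈ nhds q, O ∩ W ⊆ interior {x ∈ N | f x = α i x}) ∧
    (∀ (O : Set (Euc n)) (i : Fin m), IsAdmissibleGerm k f q O →
      (∃ W₀ ∈ nhds q, interior {x ∈ N | f x = α i x} ∩ W₀ ⊆ O) →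
      ∃ W₁ ∈ nhds q, O ∩ W₁ = interior {x ∈ N | f x = α i x} ∩ W₁) := by
  have hact : ∀ i, f q = α i q := all_active hf hrep heff
  obtain ⟨hN, hqN, hCD, hmin⟩ := hrep
  have hone : (1 : WithTop ℕ∞) ≤ ((k : ℕ∞) : WithTop ℕ∞) := by exact_mod_cast hk
  have hkey := fun i => key_geom hk hN hqN hCD hmin hact hLIG i
  have hVstrict := fun i => strictSet_open_subset hN (fun j => (hCD j).continuousOn) hmin i
  have hVsub := fun i => (hVstrict i).2
  have hVopen := fun i => (hVstrict i).1
  have hdiff : ∀ (j : Fin m), ∀ x ∈ N, DifferentiableAt ℝ (α j) x := fun j x hx =>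
    ((hCD j).differentiableOn (by exact_mod_cast (show k ≠ 0 by omega))).differentiableAt (hN.mem_nhds hx)
  -- part (a)
  have parta : ∀ i, IsAdmissibleGerm k f q (interior {x ∈ N | f x = α i x}) := by
    intro i
    refine ⟨isOpen_interior, ?_, ?_, ?_⟩
    · rw [mem_closure_iff_nhds]
      intro U hU
      obtain ⟨W', hW', hWU, ⟨x, hxW', hxN, hxs⟩, -⟩ := hkey i U hU
      exact ⟨x, hWU hxW', hVsub i ⟨hxN, hxs⟩⟩
    · exact ((hCD i).mono fun y hy => (interior_subset hy).1).congr
        fun y hy => (interior_subset hy).2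
    · intro W hW
      obtain ⟨W', h1, h2, -, h4⟩ := hkey i W hW
      exact ⟨W', h1, h2, h4⟩
  -- part (b)
  have partb : ∀ O : Set (Euc n), IsAdmissibleGerm k f q O →
      ∃ i, ∃ W ∈ nhds q, O ∩ W ⊆ interior {x ∈ N | f x = α i x} := by
    intro O hO
    obtain ⟨hOopen, hOcl, hOCD, hOconn⟩ := hO
    have hfc : ∀ j : Fin m, ContinuousOn (fderiv ℝ (α j)) N := fun j =>
      (hCD j).continuousOn_fderiv_of_isOpen hN hone
    have hgradinj : Function.Injective fun i : Fin m => gradient (α i) q := hLIG.injective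
    have hfdne : ∀ p : Fin m × Fin m, p.1 ≠ p.2 →
        fderiv ℝ (α p.1) q ≠ fderiv ℝ (α p.2) q := by
      intro p hp heq
      exact hp (hgradinj (by simp only [gradient, heq]))
    have hev : ∀ᶠ x in nhds q, x ∈ N ∧ ∀ p : Fin m × Fin m, p.1 ≠ p.2 →
        fderiv ℝ (α p.1) x ≠ fderiv ℝ (α p.2) x := by
      refine Filter.Eventually.and (hN.mem_nhds hqN) (Filter.eventually_all.2 fun p => ?_)
      by_cases hp : p.1 = p.2
      · exact Filter.Eventually.of_forall fun x h => absurd hp h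
      · have hDc : ContinuousAt (fun x => fderiv ℝ (α p.1) x - fderiv ℝ (α p.2) x) q :=
          ((hfc p.1).sub (hfc p.2)).continuousAt (hN.mem_nhds hqN)
        have hne0 : (fun x => fderiv ℝ (α p.1) x - fderiv ℝ (α p.2) x) q ≠ 0 :=
          sub_ne_zero.2 (hfdne p hp)
        exact (hDc.eventually_ne hne0).mono fun x hx _ => sub_ne_zero.1 hx
    obtain ⟨W', hW'nhds, hW'sub, hconn⟩ := hOconn _ hev
    set S : Set (Euc n) := O ∩ W' with hS
    have hSV : ∀ x ∈ S, ∃ i : Fin m, x ∈ {y | y ∈ N ∧ ∀ j, j ≠ i → α i y < α j y} := by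
      rintro x ⟨hxO, hxW'⟩
      obtain ⟨hxN, hxdist⟩ := hW'sub hxW'
      obtain ⟨i, hi⟩ := (hmin x hxN).2
      refine ⟨i, hxN, fun j hj => ?_⟩
      rcases lt_or_eq_of_le ((hmin x hxN).1 j) with hlt | heq
      · rwa [hi] at hlt
      · exfalso
        have hfdiff : DifferentiableAt ℝ f x :=
          (hOCD.differentiableOn (by exact_mod_cast (show k ≠ 0 by omega))).differentiableAt (hOopen.mem_nhds hxO)
        have key : ∀ l : Fin m, f x = α l x → fderiv ℝ (α l) x = fderiv ℝ f x := by
          intro l hl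
          have hloc : IsLocalMin (fun y => α l y - f y) x := by
            have hev2 : ∀ᶠ y in nhds x, 0 ≤ α l y - f y := by
              filter_upwards [hN.mem_nhds hxN] with y hy
              exact sub_nonneg.2 ((hmin y hy).1 l)
            have h0 : α l x - f x = 0 := by rw [hl]; ring
            exact hev2.mono fun y hy => by simp only [h0]; exact hy
          have hd : fderiv ℝ (fun y => α l y - f y) x = 0 := hloc.fderiv_eq_zero
          rw [fderiv_fun_sub (hdiff l x hxN) hfdiff] at hd
          exact sub_eq_zero.1 hd
        have h1 := key i hi
        have h2 := key j heq
        exact hxdist (i, j) hj.symm (h1.trans h2.symm)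
    obtain ⟨x₀, hx₀S⟩ := hconn.nonempty
    obtain ⟨i₀, hx₀V⟩ := hSV x₀ hx₀S
    have hSsub : S ⊆ {y | y ∈ N ∧ ∀ j, j ≠ i₀ → α i₀ y < α j y} := by
      refine IsPreconnected.subset_left_of_subset_union (hVopen i₀)
        (v := ⋃ j, ⋃ _ : j ≠ i₀, {y | y ∈ N ∧ ∀ l, l ≠ j → α j y < α l y})
        (isOpen_iUnion fun j => isOpen_iUnion fun _ => hVopen j) ?_ ?_
        ⟨x₀, hx₀S, hx₀V⟩ hconn.isPreconnected
      · rw [Set.disjoint_left]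
        rintro y hy hmem
        simp only [mem_iUnion] at hmem
        obtain ⟨j, hj, hyj⟩ := hmem
        exact absurd (hyj.2 i₀ (Ne.symm hj)) (not_lt.2 (hy.2 j hj).le)
      · intro x hx
        obtain ⟨i, hxV⟩ := hSV x hx
        by_cases hii : i = i₀
        · exact Or.inl (hii ▸ hxV)
        · exact Or.inr (mem_iUnion.2 ⟨i, mem_iUnion.2 ⟨hii, hxV⟩⟩)
    exact ⟨i₀, W', hW'nhds, fun x hx => hVsub i₀ (hSsub hx)⟩
  refine ⟨parta, partb, ?_⟩
  -- part (c)
  intro O i hO hcont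
  obtain ⟨W₀, hW₀, hsub⟩ := hcont
  obtain ⟨j, W, hWnh, hOW⟩ := partb O hO
  by_cases hji : j = i
  · subst hji
    refine ⟨W ∩ W₀, Filter.inter_mem hWnh hW₀, ?_⟩
    ext x
    constructor
    · rintro ⟨hxO, hxW, hxW₀⟩
      exact ⟨hOW ⟨hxO, hxW⟩, hxW, hxW₀⟩
    · rintro ⟨hxA, hxW, hxW₀⟩
      exact ⟨hsub ⟨hxA, hxW₀⟩, hxW, hxW₀⟩
  · exfalso
    obtain ⟨W', hW', hWU, ⟨x, hxW', hxN, hxs⟩, -⟩ :=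
      hkey i (W ∩ W₀) (Filter.inter_mem hWnh hW₀)
    have hxA : x ∈ interior {x ∈ N | f x = α i x} := hVsub i ⟨hxN, hxs⟩
    have hxO : x ∈ O := hsub ⟨hxA, (hWU hxW').2⟩
    have hxAj : x ∈ interior {x ∈ N | f x = α j x} := hOW ⟨hxO, (hWU hxW').1⟩
    have h1 : f x = α j x := (interior_subset hxAj).2
    have h2 : f x = α i x := (interior_subset hxA).2
    have h3 : α i x < α j x := hxs j hji
    rw [← h1, ← h2] at h3
    exact lt_irrefl _ h3
end
end

section
/- Min-type critical points are critical points of the restriction: Let α₁, …, α_m : ℝⁿ → ℝ be C¹ on a neighborhood of q with α₁(q) = ⋯ = α_m(q), and suppose 0 lies in the convex hull of {∇α₁(q), …, ∇α_m(q)}. Let s ≥ 0 and let ψ be any map from a neighborhood of 0 in ℝ^s to ℝⁿ that is differentiable at 0, with ψ(0) = q and whose image is contained in the equality set {x : α₁(x) = ⋯ = α_m(x)}. Then the derivative of α₁ ∘ ψ at 0 is zero; that is, q is a critical point of the restriction of any αᵢ (equivalently, of f = min{α₁, …, α_m}) to the equality set. -/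
noncomputable section

open Set

/-- **Min-type critical points are critical points of the restriction.** Let `α₁, …, α_m` be
`C¹` on a neighborhood of `q`, with equal values at `q`, and suppose `0` lies in the convex
hull of the gradients `∇αᵢ(q)` (i.e. `q` is a Min-type critical point of `min αᵢ`). Then for
any map `ψ` from a neighborhood of `0` in `ℝ^s` to `ℝⁿ`, differentiable at `0`, with
`ψ 0 = q` and image contained in the equality set `{α₁ = ⋯ = α_m}`, the derivative of each
`αᵢ ∘ ψ` at `0` vanishes. -/
theorem minType_crit_is_crit_of_restriction {n : ℕ} (m s : ℕ)
    (α : Fin m → Euc n → ℝ) (q : Euc n)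
    (N : Set (Euc n)) (hN : IsOpen N) (hqN : q ∈ N)
    (hC1 : ∀ i, ContDiffOn ℝ 1 (α i) N)
    (heqq : ∀ i j, α i q = α j q)
    (hconv : (0 : Euc n) ∈ convexHull ℝ (Set.range fun i => gradient (α i) q))
    (ψ : Euc s → Euc n) (hψdiff : DifferentiableAt ℝ ψ 0) (hψ0 : ψ 0 = q)
    (W : Set (Euc s)) (hW : W ∈ nhds (0 : Euc s))
    (himg : ∀ w ∈ W, ∀ i j, α i (ψ w) = α j (ψ w)) :
    ∀ i, fderiv ℝ (fun w => α i (ψ w)) 0 = 0 := by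
  intro i₀
  -- differentiability of each α i at q
  have hdiff : ∀ i, DifferentiableAt ℝ (α i) q := fun i =>
    ((hC1 i).contDiffAt (hN.mem_nhds hqN)).differentiableAt one_ne_zero
  -- all compositions have the same derivative at 0
  have hsame : ∀ i : Fin m, fderiv ℝ (fun w => α i (ψ w)) 0
      = fderiv ℝ (fun w => α i₀ (ψ w)) 0 := by
    intro i
    apply Filter.EventuallyEq.fderiv_eq
    exact Filter.eventuallyEq_of_mem hW fun w hw => himg w hw i i₀
  -- chain rule
  have hchain : ∀ i : Fin m, fderiv ℝ (fun w => α i (ψ w)) 0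
      = (fderiv ℝ (α i) q).comp (fderiv ℝ ψ 0) := by
    intro i
    have := fderiv_comp (𝕜 := ℝ) 0 (by rw [hψ0]; exact hdiff i) hψdiff
    simpa [Function.comp_def, hψ0] using this
  -- extract convex combination
  rw [mem_convexHull_iff_exists_fintype] at hconv
  obtain ⟨ι, hι, w, z, hw₀, hw₁, hz, hx⟩ := hconv
  choose k hk using fun j => hz j
  -- the corresponding combination of fderivs is 0
  have hfd : ∑ j, w j • fderiv ℝ (α (k j)) q = 0 := by
    have : ∀ j, fderiv ℝ (α (k j)) q = (InnerProductSpace.toDual ℝ (Euc n)) (z j) := by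
      intro j
      rw [← hk j]
      simp [gradient, LinearIsometryEquiv.apply_symm_apply]
    simp_rw [this, ← map_smul, ← map_sum, hx, map_zero]
  -- conclude
  rw [hsame i₀]  -- trivial
  have hD : fderiv ℝ (fun w => α i₀ (ψ w)) 0 = 0 := by
    calc fderiv ℝ (fun w => α i₀ (ψ w)) 0
        = (∑ j, w j) • fderiv ℝ (fun w => α i₀ (ψ w)) 0 := by rw [hw₁, one_smul]
      _ = ∑ j, w j • fderiv ℝ (fun w => α (k j) (ψ w)) 0 := by
          rw [Finset.sum_smul]
          exact Finset.sum_congr rfl fun j _ => by rw [hsame (k j)]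
      _ = ∑ j, w j • ((fderiv ℝ (α (k j)) q).comp (fderiv ℝ ψ 0)) := by
          exact Finset.sum_congr rfl fun j _ => by rw [hchain (k j)]
      _ = (∑ j, w j • fderiv ℝ (α (k j)) q).comp (fderiv ℝ ψ 0) := by
          rw [ContinuousLinearMap.finset_sum_comp]
          exact Finset.sum_congr rfl fun j _ => by rw [ContinuousLinearMap.smul_comp]
      _ = 0 := by rw [hfd, ContinuousLinearMap.zero_comp]
  exact hD
end
end

section
/- Existence of contact pieces: Let S ⊆ ℝⁿ be a nonempty compact, locally connected set, let q ∈ ℝⁿ ∖ S, and suppose the contact set Γ(q) = {p₁, …, p_m} is finite, with p₁, …, p_m distinct. Then there exist r > dist(q, S), pairwise disjoint closed connected sets S₁, …, S_m with Sᵢ ⊆ S ∩ closedBall(q, r) and pᵢ in the interior of Sᵢ relative to S, and an open neighborhood N of q such that dist(x, S) = min_{1≤i≤m} dist(x, Sᵢ) for every x ∈ N. -/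
noncomputable section

open Set

/-- The contact set `Γ(q)` of `q` in `S`: the points of `S` realizing `dist(q, S)`. -/
def contactSet {n : ℕ} (S : Set (Euc n)) (q : Euc n) : Set (Euc n) :=
  {p ∈ S | dist q p = Metric.infDist q S}

/-- **Existence of contact pieces.** Let `S ⊆ ℝⁿ` be nonempty, compact and locally connected,
`q ∉ S`, and suppose `Γ(q) = {p₁, …, p_m}` is finite with distinct points. Then there exist
`r > dist(q, S)`, pairwise disjoint closed connected sets `Sᵢ ⊆ S ∩ closedBall(q, r)` with
each `pᵢ` in the interior of `Sᵢ` relative to `S`, and an open neighborhood `N` of `q` on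
which `dist(·, S) = minᵢ dist(·, Sᵢ)`. -/
theorem exists_contact_pieces {n : ℕ} (m : ℕ)
    (S : Set (Euc n)) (hSne : S.Nonempty) (hScpt : IsCompact S)
    (hSlc : LocallyConnectedSpace S)
    (q : Euc n) (hq : q ∉ S)
    (p : Fin m → Euc n) (hpinj : Function.Injective p)
    (hΓ : contactSet S q = Set.range p) :
    ∃ r : ℝ, Metric.infDist q S < r ∧
      ∃ Sp : Fin m → Set (Euc n),
        (Pairwise fun i j => Disjoint (Sp i) (Sp j)) ∧
        (∀ i, IsClosed (Sp i) ∧ IsConnected (Sp i) ∧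
          Sp i ⊆ S ∩ Metric.closedBall q r ∧
          ∃ O : Set (Euc n), IsOpen O ∧ p i ∈ O ∧ S ∩ O ⊆ Sp i) ∧
        ∃ N : Set (Euc n), IsOpen N ∧ q ∈ N ∧ ∀ x ∈ N,
          (∀ i, Metric.infDist x S ≤ Metric.infDist x (Sp i)) ∧
          ∃ i, Metric.infDist x S = Metric.infDist x (Sp i) := by
  classical
  set d := Metric.infDist q S with hd
  have hpS : ∀ i, p i ∈ S ∧ dist q (p i) = d := fun i => by
    have : p i ∈ contactSet S q := hΓ ▸ Set.mem_range_self i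
    exact this
  -- choose ε > 0 separating the contact points
  obtain ⟨ε, hε0, hεlt⟩ : ∃ ε > 0, ∀ i j, i ≠ j → 2 * ε < dist (p i) (p j) := by
    set T : Finset ℝ := insert 1 (((Finset.univ ×ˢ Finset.univ).filter
      fun ij : Fin m × Fin m => ij.1 ≠ ij.2).image
        fun ij => dist (p ij.1) (p ij.2)) with hT
    have hTne : T.Nonempty := ⟨1, Finset.mem_insert_self _ _⟩
    have hpos : ∀ x ∈ T, 0 < x := by
      intro x hx
      rcases Finset.mem_insert.mp hx with rfl | hx
      · norm_num
      · obtain ⟨ij, hij, rfl⟩ := Finset.mem_image.mp hx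
        exact dist_pos.mpr fun h => (Finset.mem_filter.mp hij).2 (hpinj h)
    have hmin0 : 0 < T.min' hTne := hpos _ (T.min'_mem hTne)
    refine ⟨T.min' hTne / 4, by linarith, fun i j hij => ?_⟩
    have hmem : dist (p i) (p j) ∈ T := Finset.mem_insert_of_mem
      (Finset.mem_image.mpr ⟨(i, j), Finset.mem_filter.mpr ⟨by simp, hij⟩, rfl⟩)
    have := T.min'_le _ hmem
    linarith
  -- connected neighborhoods in S
  have hVex : ∀ i : Fin m, ∃ V : Set S,
      V ⊆ (Subtype.val ⁻¹' Metric.ball (p i) ε) ∧ IsOpen V ∧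
        (⟨p i, (hpS i).1⟩ : S) ∈ V ∧ IsConnected V := by
    intro i
    refine locallyConnectedSpace_iff_subsets_isOpen_isConnected.mp hSlc _ _ ?_
    have hb : p i ∈ Metric.ball (p i) ε := Metric.mem_ball_self hε0
    exact (Metric.isOpen_ball.preimage continuous_subtype_val).mem_nhds hb
  choose V hVsub hVopen hVmem hVconn using hVex
  set C : Fin m → Set (Euc n) := fun i => Subtype.val '' V i with hC
  set Sp : Fin m → Set (Euc n) := fun i => closure (C i) with hSp
  have hCS : ∀ i, C i ⊆ S := fun i => by
    rintro y ⟨⟨y, hyS⟩, -, rfl⟩; exact hyS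
  have hCball : ∀ i, C i ⊆ Metric.ball (p i) ε := fun i => by
    rintro y ⟨z, hz, rfl⟩; exact hVsub i hz
  have hSpS : ∀ i, Sp i ⊆ S := fun i =>
    closure_minimal (hCS i) hScpt.isClosed
  have hSpball : ∀ i, Sp i ⊆ Metric.closedBall (p i) ε := fun i =>
    (closure_mono (hCball i)).trans Metric.closure_ball_subset_closedBall
  have hpiSp : ∀ i, p i ∈ Sp i := fun i =>
    subset_closure ⟨_, hVmem i, rfl⟩
  -- open sets O i whose trace on S is inside Sp i
  have hOex : ∀ i : Fin m, ∃ O : Set (Euc n), IsOpen O ∧ p i ∈ O ∧ S ∩ O ⊆ Sp i := by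
    intro i
    obtain ⟨O, hOopen, hOsub⟩ := isOpen_induced_iff.mp (hVopen i)
    refine ⟨O, hOopen, ?_, ?_⟩
    · have := hVmem i; rw [← hOsub] at this; exact this
    · rintro y ⟨hyS, hyO⟩
      have : (⟨y, hyS⟩ : S) ∈ V i := by rw [← hOsub]; exact hyO
      exact subset_closure ⟨_, this, rfl⟩
  choose O hOopen hpiO hOtrace using hOex
  set U : Set (Euc n) := ⋃ i, O i with hU
  have hUopen : IsOpen U := isOpen_iUnion hOopen
  -- the key: any nearest point lying in U gives the conclusion
  have hSpne : ∀ i, (Sp i).Nonempty := fun i => ⟨p i, hpiSp i⟩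
  have hle : ∀ (x : Euc n) (i : Fin m),
      Metric.infDist x S ≤ Metric.infDist x (Sp i) := by
    intro x i
    exact Metric.infDist_le_infDist_of_subset (hSpS i) (hSpne i)
  have key : ∀ x : Euc n, ∀ y ∈ S, Metric.infDist x S = dist x y → y ∈ U →
      (∀ i, Metric.infDist x S ≤ Metric.infDist x (Sp i)) ∧
        ∃ i, Metric.infDist x S = Metric.infDist x (Sp i) := by
    intro x y hyS hxy hyU
    refine ⟨hle x, ?_⟩
    obtain ⟨i, hyO⟩ := Set.mem_iUnion.mp hyU
    have hySp : y ∈ Sp i := hOtrace i ⟨hyS, hyO⟩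
    refine ⟨i, le_antisymm (hle x i) ?_⟩
    rw [hxy]
    exact Metric.infDist_le_dist_of_mem hySp
  -- find the neighborhood N
  have hNex : ∃ N : Set (Euc n), IsOpen N ∧ q ∈ N ∧ ∀ x ∈ N,
      (∀ i, Metric.infDist x S ≤ Metric.infDist x (Sp i)) ∧
        ∃ i, Metric.infDist x S = Metric.infDist x (Sp i) := by
    by_cases hSU : S ⊆ U
    · refine ⟨Set.univ, isOpen_univ, Set.mem_univ _, fun x _ => ?_⟩
      obtain ⟨y, hyS, hxy⟩ := hScpt.exists_infDist_eq_dist hSne x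
      exact key x y hyS hxy (hSU hyS)
    · set K : Set (Euc n) := S \ U with hK
      have hKne : K.Nonempty := Set.diff_nonempty.mpr hSU
      have hKcpt : IsCompact K := hScpt.diff hUopen
      have hKgt : d < Metric.infDist q K := by
        obtain ⟨z, hzK, hz⟩ := hKcpt.exists_infDist_eq_dist hKne q
        rw [hz]
        rcases lt_or_ge d (dist q z) with h | h
        · exact h
        · exfalso
          have hz' : dist q z = d :=
            le_antisymm h (Metric.infDist_le_dist_of_mem hzK.1)
          have : z ∈ contactSet S q := ⟨hzK.1, hz'⟩
          rw [hΓ] at this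
          obtain ⟨i, rfl⟩ := this
          exact hzK.2 (Set.mem_iUnion.mpr ⟨i, hpiO i⟩)
      refine ⟨{x | Metric.infDist x S < Metric.infDist x K},
        isOpen_lt (Metric.continuous_infDist_pt S) (Metric.continuous_infDist_pt K),
        hKgt, fun x hx => ?_⟩
      obtain ⟨y, hyS, hxy⟩ := hScpt.exists_infDist_eq_dist hSne x
      have hyU : y ∈ U := by
        by_contra hyU
        have : Metric.infDist x K ≤ dist x y :=
          Metric.infDist_le_dist_of_mem ⟨hyS, hyU⟩
        rw [← hxy] at this
        exact absurd (lt_of_lt_of_le hx this) (lt_irrefl _)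
      exact key x y hyS hxy hyU
  -- assemble
  refine ⟨d + ε, by linarith, Sp, ?_, ?_, hNex⟩
  · intro i j hij
    rw [Set.disjoint_left]
    intro y hyi hyj
    have h1 := hSpball i hyi
    have h2 := hSpball j hyj
    have := hεlt i j hij
    rw [Metric.mem_closedBall] at h1 h2
    have htri := dist_triangle (p i) y (p j)
    rw [dist_comm] at h1
    linarith
  · intro i
    refine ⟨isClosed_closure, ?_, ?_, O i, hOopen i, hpiO i, hOtrace i⟩
    · exact IsConnected.closure ⟨⟨p i, ⟨_, hVmem i, rfl⟩⟩,
        (hVconn i).isPreconnected.image _ continuous_subtype_val.continuousOn⟩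
    · intro y hy
      refine ⟨hSpS i hy, ?_⟩
      have h1 := hSpball i hy
      rw [Metric.mem_closedBall] at h1 ⊢
      have := dist_triangle y (p i) q
      rw [dist_comm (p i) q] at this
      have h2 := (hpS i).2
      linarith
end
end

section
/- Strict separation along contact rays: Let S ⊆ ℝⁿ be nonempty compact, q ∈ ℝⁿ ∖ S with r = dist(q, S), and suppose Γ(q) = {p₁, …, p_m} with the pᵢ distinct. Let S₁, …, S_m ⊆ S be pairwise disjoint closed sets with pᵢ ∈ Sᵢ for each i. Then for every i, every j ≠ i, and every t ∈ (0,1), the point x = q + t·(pᵢ − q) satisfies dist(x, Sᵢ) < dist(x, Sⱼ). In particular, every point of the open segment from q to pᵢ is strictly closer to Sᵢ than to any other piece Sⱼ. -/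
noncomputable section

open Set

/-- **Strict separation along contact rays.** Let `S ⊆ ℝⁿ` be nonempty compact, `q ∉ S`, and
suppose `Γ(q) = {p₁, …, p_m}` with the `pᵢ` distinct. Let `S₁, …, S_m ⊆ S` be pairwise
disjoint closed sets with `pᵢ ∈ Sᵢ`. Then every point `x = q + t (pᵢ − q)` of the open
segment from `q` to `pᵢ` (with `0 < t < 1`) is strictly closer to `Sᵢ` than to any
other piece `Sⱼ`. -/
theorem strict_separation_along_contact_rays {n : ℕ} (m : ℕ)
    (S : Set (Euc n)) (hSne : S.Nonempty) (hScpt : IsCompact S)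
    (q : Euc n) (hq : q ∉ S)
    (p : Fin m → Euc n) (hpinj : Function.Injective p)
    (hΓ : contactSet S q = Set.range p)
    (Sp : Fin m → Set (Euc n))
    (hSpclosed : ∀ i, IsClosed (Sp i)) (hSpsub : ∀ i, Sp i ⊆ S)
    (hSpdisj : Pairwise fun i j => Disjoint (Sp i) (Sp j))
    (hSpmem : ∀ i, p i ∈ Sp i) :
    ∀ i j, j ≠ i → ∀ t ∈ Set.Ioo (0 : ℝ) 1,
      Metric.infDist (q + t • (p i - q)) (Sp i) <
        Metric.infDist (q + t • (p i - q)) (Sp j) := by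
  intro i j hij t ht
  obtain ⟨ht0, ht1⟩ := ht
  set r : ℝ := Metric.infDist q S with hr
  have hSclosed : IsClosed S := hScpt.isClosed
  have hrpos : 0 < r := (hSclosed.notMem_iff_infDist_pos hSne).mp hq
  have hpi : dist q (p i) = r := by
    have : p i ∈ contactSet S q := by rw [hΓ]; exact ⟨i, rfl⟩
    exact this.2
  set x : Euc n := q + t • (p i - q) with hx
  have hnormpi : ‖p i - q‖ = r := by rw [← hpi, dist_eq_norm, norm_sub_rev]
  have hdqx : dist q x = t * r := by
    rw [hx, dist_eq_norm, show q - (q + t • (p i - q)) = -(t • (p i - q)) by module,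
      norm_neg, norm_smul, Real.norm_eq_abs, abs_of_pos ht0, hnormpi]
  have hdxpi : dist x (p i) = (1 - t) * r := by
    rw [hx, dist_eq_norm]
    have : q + t • (p i - q) - p i = -((1 - t) • (p i - q)) := by
      module
    rw [this, norm_neg, norm_smul, Real.norm_eq_abs, abs_of_pos (by linarith),
      hnormpi]
  have hle : Metric.infDist x (Sp i) ≤ (1 - t) * r :=
    hdxpi ▸ Metric.infDist_le_dist_of_mem (hSpmem i)
  -- Sp j is compact and nonempty; infDist attained
  have hcpt : IsCompact (Sp j) := hScpt.of_isClosed_subset (hSpclosed j) (hSpsub j)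
  obtain ⟨y, hymem, hyeq⟩ := hcpt.exists_infDist_eq_dist ⟨p j, hSpmem j⟩ x
  have hqy : r ≤ dist q y := Metric.infDist_le_dist_of_mem (hSpsub j hymem)
  have hlow : dist q y - t * r ≤ dist x y := by
    have := dist_triangle q x y
    linarith [hdqx ▸ this]
  rw [hyeq]
  by_contra hcon
  push_neg at hcon
  -- then dist x y ≤ (1-t) r, forcing dist q y = r and triangle equality
  have hxy : dist x y ≤ (1 - t) * r := le_trans hcon hle
  have hqyr : dist q y = r := by nlinarith
  have heq : dist q x + dist x y = dist q y := by nlinarith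
  have hwbtw : Wbtw ℝ q x y := dist_add_dist_eq_iff.mp heq
  obtain ⟨s, hs, hsx⟩ := hwbtw
  have hsx' : x = q + s • (y - q) := by
    rw [← hsx]; simp [AffineMap.lineMap_apply]; module
  have hst : s = t := by
    have hnormy : ‖y - q‖ = r := by rw [← hqyr, dist_eq_norm, norm_sub_rev]
    have h1 : dist q x = s * r := by
      rw [hsx', dist_eq_norm, show q - (q + s • (y - q)) = -(s • (y - q)) by module,
        norm_neg, norm_smul, Real.norm_eq_abs, abs_of_nonneg hs.1, hnormy]
    have h2 : s * r = t * r := by rw [← h1, hdqx]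
    exact mul_right_cancel₀ (ne_of_gt hrpos) h2
  have hyi : y = p i := by
    have : t • (p i - q) = t • (y - q) := by
      have := hsx'
      rw [hst] at this
      rw [hx] at this
      exact add_left_cancel this
    have h2 : p i - q = y - q := smul_right_injective (Euc n) (ne_of_gt ht0) this
    exact (sub_left_inj.mp h2).symm
  exact Set.disjoint_left.mp (hSpdisj hij.symm) (hyi ▸ hSpmem i) hymem
end
end
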